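/- The generating function of partial permutations in P(n,k) by the inversion statistic is the q-analog formula: ∑_{π ∈ P(n,k)} q^{inv(π)} = [n choose k]_q^2 · [n-k]_q!, where [n choose k]_q is the Gaussian binomial coefficient and [m]_q! = [1]_q[2]_q⋯[m]_q. -/

import Mathlib

namespace PP

def isPP {n : ℕ} (M : Fin n → Fin n → Bool) : Prop :=
  (∀ i j j', M i j = true → M i j' = true → j = j') ∧
  (∀ i i' j, M i j = true → M i' j = true → i = i')

def zeroRows {n : ℕ} (M : Fin n → Fin n → Bool) : ℕ :=
  (Finset.univ.filter (fun i : Fin n => ∀ j, M i j = false)).card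

def invStat {n : ℕ} (M : Fin n → Fin n → Bool) : ℕ :=
  (Finset.univ.filter (fun p : Fin n × Fin n =>
    M p.1 p.2 = false ∧ (∀ j' < p.2, M p.1 j' = false) ∧ (∀ i' < p.1, M i' p.2 = false) ∧
    ((∃ j', M p.1 j' = true) ∨ (∃ i', M i' p.2 = true)))).card

def rlminStat {n : ℕ} (M : Fin n → Fin n → Bool) : ℕ :=
  (Finset.univ.filter (fun p : Fin n × Fin n =>
    M p.1 p.2 = true ∧ ∀ l < p.2, ∃ i' < p.1, M i' l = true)).card

def excStat {n : ℕ} (M : Fin n → Fin n → Bool) : ℕ :=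
  (Finset.univ.filter (fun p : Fin n × Fin n => M p.1 p.2 = true ∧ p.1 < p.2)).card

def wexStat {n : ℕ} (M : Fin n → Fin n → Bool) : ℕ :=
  (Finset.univ.filter (fun p : Fin n × Fin n => M p.1 p.2 = true ∧ p.1 ≤ p.2)).card

def reachN {n : ℕ} (M : Fin n → Fin n → Bool) : ℕ → Fin n → Fin n → Prop
  | 0, i, j => i = j
  | m+1, i, j => ∃ l, M i l = true ∧ reachN M m l j

noncomputable def cycStat {n : ℕ} (M : Fin n → Fin n → Bool) : ℕ :=
  Nat.card {i : Fin n // (∃ m, 0 < m ∧ reachN M m i i) ∧ ∀ j, (∃ m, reachN M m i j) → j ≤ i}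

def fixStat {n : ℕ} (M : Fin n → Fin n → Bool) : ℕ :=
  (Finset.univ.filter (fun i : Fin n => M i i = true)).card

noncomputable def cycGe2Stat {n : ℕ} (M : Fin n → Fin n → Bool) : ℕ :=
  Nat.card {i : Fin n // (∃ m, 0 < m ∧ reachN M m i i) ∧ (∀ j, (∃ m, reachN M m i j) → j ≤ i) ∧ M i i = false}

def Conn {n : ℕ} (M : Fin n → Fin n → Bool) : Prop :=
  ∀ i : ℕ, 0 < i → i < n → ∃ r : Fin n, r.1 < i ∧ ∀ c : Fin n, c.1 < i → M r c = false

def UpDownFrom {n : ℕ} (M : Fin n → Fin n → Bool) (i : Fin n) : Prop :=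
  ∀ (m : ℕ) (a b : Fin n),
    (∀ m', 1 ≤ m' → m' ≤ m + 1 → ¬ reachN M m' i i) →
    reachN M m i a → M a b = true →
    ((Even m → a < b) ∧ (¬ Even m → b < a))

def CUD {n : ℕ} (M : Fin n → Fin n → Bool) : Prop :=
  (∀ i : Fin n,
      ((∃ m, 0 < m ∧ reachN M m i i) ∧ ∀ j, (∃ m, reachN M m i j) → i ≤ j) →
      UpDownFrom M i) ∧
  (∀ i : Fin n, (∀ i', M i' i = false) → UpDownFrom M i)

def desStat {n : ℕ} (M : Fin n → Fin n → Bool) : ℕ :=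
  (Finset.univ.filter (fun p : Fin n × Fin n =>
      M p.1 p.2 = true ∧ ∃ h : p.1.1 + 1 < n, ∃ b : Fin n, M ⟨p.1.1 + 1, h⟩ b = true ∧ b < p.2)).card
  + (Finset.univ.filter (fun p : Fin n =>
      (∀ j, M p j = false) ∧ ∃ _h : 0 < p.1, ∃ a j : Fin n,
        M ⟨p.1 - 1, Nat.lt_of_le_of_lt (Nat.sub_le _ _) p.isLt⟩ a = true ∧
        (∀ i, M i j = false) ∧
        (Finset.univ.filter (fun m : Fin n => (∀ i, M i m = false) ∧ m < j)).card
          = (Finset.univ.filter (fun r : Fin n => (∀ c, M r c = false) ∧ r < p)).card ∧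
        j < a)).card

def gbinom {R : Type*} [CommRing R] (q : R) : ℕ → ℕ → R
  | _, 0 => 1
  | 0, _+1 => 0
  | n+1, k+1 => gbinom q n k + q ^ (k+1) * gbinom q n (k+1)

end PP



namespace PP
open Finset

variable {R : Type*} [CommRing R] (q : R)

theorem gbinom_zero_right (n : ℕ) : gbinom q n 0 = 1 := by cases n <;> rfl

theorem gbinom_eq_zero : ∀ {n k : ℕ}, n < k → gbinom q n k = 0
  | 0, _+1, _ => rfl
  | n+1, k+1, h => by
    rw [gbinom, gbinom_eq_zero (by omega), gbinom_eq_zero (by omega)]; ring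

theorem gbinom_self (n : ℕ) : gbinom q n n = 1 := by
  induction n with
  | zero => rfl
  | succ n ih => rw [gbinom, ih, gbinom_eq_zero q (by omega)]; ring

open Finset in
noncomputable def statN (A : Finset ℕ) : ℕ := ∑ a ∈ A, ((Finset.range a).filter (· ∉ A)).card

open Finset in
theorem statN_insert {n : ℕ} {A : Finset ℕ} (hA : A ⊆ range n) :
    statN (insert n A) = statN A + (n - A.card) := by
  classical
  have hn : n ∉ A := fun h => absurd (hA h) (by simp)
  rw [statN, Finset.sum_insert hn]
  have h1 : ((range n).filter (· ∉ insert n A)).card = n - A.card := by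
    have : (range n).filter (· ∉ insert n A) = (range n) \ A := by
      ext x
      simp only [mem_filter, mem_sdiff, mem_insert, mem_range]
      constructor
      · rintro ⟨h, h2⟩; exact ⟨h, fun hx => h2 (Or.inr hx)⟩
      · rintro ⟨h, h2⟩; exact ⟨h, by rintro (rfl | hx) <;> [omega; exact h2 hx]⟩
    rw [this, card_sdiff_of_subset hA, card_range]
  have h2 : statN A = ∑ a ∈ A, ((range a).filter (· ∉ insert n A)).card := by
    apply Finset.sum_congr rfl
    intro a ha
    congr 1
    apply Finset.filter_congr
    intro x hx
    have : x < a := mem_range.mp hx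
    have : a < n := mem_range.mp (hA ha)
    simp only [mem_insert]
    constructor
    · intro h h2; rcases h2 with rfl | h2; omega; exact h h2
    · intro h h2; exact h (Or.inr h2)
  rw [statN] at h2 ⊢; omega

open Finset in
theorem sum_statN : ∀ (n m : ℕ), m ≤ n →
    ∑ A ∈ (range n).powersetCard m, q ^ statN A = gbinom q n (n - m)
  | n, 0, _ => by
    simp [Finset.powersetCard_zero, statN, gbinom_self]
  | 0, m+1, h => by omega
  | n+1, m+1, h => by
    classical
    have hrange : range (n+1) = insert n (range n) := Finset.range_add_one
    have hinj : ∀ A ∈ (range n).powersetCard m, ∀ A' ∈ (range n).powersetCard m,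
        insert n A = insert n A' → A = A' := by
      intro A hA A' hA' hins
      have h1 : n ∉ A := fun hx => by simpa using (Finset.mem_powersetCard.mp hA).1 hx
      have h2 : n ∉ A' := fun hx => by simpa using (Finset.mem_powersetCard.mp hA').1 hx
      rw [← Finset.erase_insert h1, ← Finset.erase_insert h2, hins]
    have hdisj : Disjoint ((range n).powersetCard (m+1))
        (((range n).powersetCard m).image (insert n)) := by
      rw [Finset.disjoint_left]
      intro A hA hA'
      obtain ⟨B, hB, rfl⟩ := Finset.mem_image.mp hA'
      have : n ∉ insert n B := fun hx => by
        simpa using (Finset.mem_powersetCard.mp hA).1 hx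
      simp at this
    rw [hrange, powersetCard_succ_insert (by simp), Finset.sum_union hdisj,
      Finset.sum_image hinj]
    have hstat : ∀ A ∈ (range n).powersetCard m, q ^ statN (insert n A) = q ^ (n - m) * q ^ statN A := by
      intro A hA
      obtain ⟨hsub, hcard⟩ := Finset.mem_powersetCard.mp hA
      rw [statN_insert hsub, hcard, pow_add, mul_comm]
    rw [Finset.sum_congr rfl hstat, ← Finset.mul_sum]
    rcases Nat.lt_or_ge m n with hmn | hmn
    · rw [sum_statN n (m+1) hmn, sum_statN n m (le_of_lt hmn)]
      have e1 : n + 1 - (m + 1) = (n - m - 1) + 1 := by omega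
      have e2 : n - (m+1) = n - m - 1 := by omega
      have e3 : n - m = (n - m - 1) + 1 := by omega
      rw [e1, e2, gbinom, ← e3]
    · have hm : m = n := by omega
      subst hm
      rw [sum_statN m m le_rfl]
      have : (range m).powersetCard (m+1) = ∅ := by
        apply Finset.powersetCard_eq_empty.mpr
        simp
      rw [this]
      simp [gbinom_self, gbinom_zero_right]


variable {R : Type*} [CommRing R] (q : R)

def inv2 {m : ℕ} (σ : Equiv.Perm (Fin m)) : ℕ :=
  (Finset.univ.filter (fun p : Fin m × Fin m => p.1 < p.2 ∧ σ p.2 < σ p.1)).card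

def gfun {m : ℕ} (t : Fin (m+1)) (τ : Equiv.Perm (Fin m)) : Fin (m+1) → Fin (m+1) :=
  Fin.lastCases t (fun i => t.succAbove (τ i))

theorem gfun_last {m : ℕ} (t : Fin (m+1)) (τ : Equiv.Perm (Fin m)) :
    gfun t τ (Fin.last m) = t := by simp [gfun]

theorem gfun_castSucc {m : ℕ} (t : Fin (m+1)) (τ : Equiv.Perm (Fin m)) (i : Fin m) :
    gfun t τ i.castSucc = t.succAbove (τ i) := by simp [gfun]

theorem gfun_inj {m : ℕ} (t : Fin (m+1)) (τ : Equiv.Perm (Fin m)) :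
    Function.Injective (gfun t τ) := by
  intro a b hab
  induction a using Fin.lastCases with
  | last =>
    induction b using Fin.lastCases with
    | last => rfl
    | cast j =>
      rw [gfun_last, gfun_castSucc] at hab
      exact absurd hab.symm (Fin.succAbove_ne t (τ j))
  | cast i =>
    induction b using Fin.lastCases with
    | last =>
      rw [gfun_last, gfun_castSucc] at hab
      exact absurd hab (Fin.succAbove_ne t (τ i))
    | cast j =>
      rw [gfun_castSucc, gfun_castSucc] at hab
      have := τ.injective (t.succAbove_right_injective hab)
      rw [this]

noncomputable def gperm {m : ℕ} (p : Fin (m+1) × Equiv.Perm (Fin m)) : Equiv.Perm (Fin (m+1)) :=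
  Equiv.ofBijective (gfun p.1 p.2) ((Finite.injective_iff_bijective).mp (gfun_inj p.1 p.2))

theorem gperm_bij {m : ℕ} : Function.Bijective (gperm (m := m)) := by
  rw [Fintype.bijective_iff_injective_and_card]
  constructor
  · intro a b hab
    have hfun : ∀ x, gfun a.1 a.2 x = gfun b.1 b.2 x :=
      fun x => congrArg (fun e : Equiv.Perm (Fin (m+1)) => e x) hab
    have h1 : a.1 = b.1 := by
      have := hfun (Fin.last m); simpa [gfun_last] using this
    have h2 : a.2 = b.2 := by
      apply Equiv.ext
      intro i
      have := hfun i.castSucc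
      rw [gfun_castSucc, gfun_castSucc, h1] at this
      exact (b.1).succAbove_right_injective this
    exact Prod.ext h1 h2
  · simp [Fintype.card_perm, Nat.factorial_succ]

theorem inv2_gperm {m : ℕ} (t : Fin (m+1)) (τ : Equiv.Perm (Fin m)) :
    inv2 (gperm (t, τ)) = (m - t.val) + inv2 τ := by
  classical
  have hg : ∀ x, gperm (t, τ) x = gfun t τ x := fun x => rfl
  rw [inv2]
  have hsplit : Finset.univ.filter (fun p : Fin (m+1) × Fin (m+1) =>
        p.1 < p.2 ∧ gperm (t, τ) p.2 < gperm (t, τ) p.1)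
      = ((Finset.univ.filter (fun i : Fin m => t ≤ (τ i).castSucc)).image
          (fun i => (i.castSucc, Fin.last m)))
        ∪ ((Finset.univ.filter (fun p : Fin m × Fin m => p.1 < p.2 ∧ τ p.2 < τ p.1)).image
          (fun p => (p.1.castSucc, p.2.castSucc))) := by
    ext p
    simp only [Finset.mem_union, Finset.mem_image, Finset.mem_filter, Finset.mem_univ, true_and]
    constructor
    · rintro ⟨hlt, hinv⟩
      obtain ⟨p1, p2⟩ := p
      simp only [hg] at hinv
      simp only at hlt hinv ⊢
      rcases Fin.eq_castSucc_or_eq_last p2 with ⟨j, rfl⟩ | rfl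
      · have hp1 : p1 ≠ Fin.last m := Fin.ne_last_of_lt hlt
        rcases Fin.eq_castSucc_or_eq_last p1 with ⟨i, rfl⟩ | rfl
        · right
          refine ⟨(i, j), ⟨Fin.castSucc_lt_castSucc_iff.mp hlt, ?_⟩, rfl⟩
          rw [gfun_castSucc, gfun_castSucc] at hinv
          exact (Fin.succAbove_lt_succAbove_iff).mp hinv
        · exact absurd rfl hp1
      · have hp1 : p1 ≠ Fin.last m := Fin.ne_last_of_lt hlt
        rcases Fin.eq_castSucc_or_eq_last p1 with ⟨i, rfl⟩ | rfl
        · left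
          refine ⟨i, ?_, rfl⟩
          rw [gfun_last, gfun_castSucc] at hinv
          exact (Fin.lt_succAbove_iff_le_castSucc t (τ i)).mp hinv
        · exact absurd rfl hp1
    · rintro (⟨i, hi, hp⟩ | ⟨pp, ⟨h1, h2⟩, hp⟩)
      · rw [← hp]
        refine ⟨Fin.castSucc_lt_last i, ?_⟩
        rw [hg, hg, gfun_last, gfun_castSucc]
        exact (Fin.lt_succAbove_iff_le_castSucc t (τ i)).mpr hi
      · rw [← hp]
        refine ⟨Fin.castSucc_lt_castSucc_iff.mpr h1, ?_⟩
        rw [hg, hg, gfun_castSucc, gfun_castSucc]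
        exact (Fin.succAbove_lt_succAbove_iff).mpr h2
  rw [hsplit, Finset.card_union_of_disjoint, Finset.card_image_of_injective,
    Finset.card_image_of_injective]
  · congr 1
    · -- card {i : t ≤ castSucc (τ i)} = m - t
      have h1 : Finset.univ.filter (fun i : Fin m => t ≤ (τ i).castSucc)
          = (Finset.univ.filter (fun v : Fin m => t ≤ v.castSucc)).map τ.symm.toEmbedding := by
        ext i
        simp only [Finset.mem_filter, Finset.mem_univ, true_and, Finset.mem_map,
          Equiv.coe_toEmbedding]
        constructor
        · intro h; exact ⟨τ i, h, τ.symm_apply_apply i⟩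
        · rintro ⟨v, hv, rfl⟩; simpa using hv
      rw [h1, Finset.card_map]
      have h2 : Finset.univ.filter (fun v : Fin m => t ≤ v.castSucc)
          = Finset.univ.filter (fun v : Fin m => t.val ≤ v.val) := by
        apply Finset.filter_congr; intro v _
        simp [Fin.le_def]
      rw [h2]
      rcases Nat.lt_or_ge t.val m with h | h
      · have h3 : Finset.univ.filter (fun v : Fin m => t.val ≤ v.val)
            = Finset.Ici (⟨t.val, h⟩ : Fin m) := by
          ext v; simp [Fin.le_def]
        rw [h3, Fin.card_Ici]
      · have ht : t.val = m := by omega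
        have h3 : Finset.univ.filter (fun v : Fin m => t.val ≤ v.val) = ∅ := by
          ext v
          simp only [Finset.mem_filter, Finset.mem_univ, true_and, Finset.notMem_empty,
            iff_false]
          omega
        rw [h3]
        simp [ht]
  · intro a b hab
    simpa [Prod.ext_iff, Fin.castSucc_inj] using hab
  · intro a b hab
    simpa using hab
  · rw [Finset.disjoint_left]
    rintro p hp hq
    obtain ⟨i, _, rfl⟩ := Finset.mem_image.mp hp
    obtain ⟨pp, _, hpp⟩ := Finset.mem_image.mp hq
    have := congrArg Prod.snd hpp
    simp at this


variable {R : Type*} [CommRing R] (q : R)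

theorem sum_inv2 : ∀ m : ℕ,
    ∑ σ : Equiv.Perm (Fin m), q ^ inv2 σ
      = ∏ i ∈ Finset.Icc 1 m, ∑ j ∈ Finset.range i, q ^ j
  | 0 => by
    simp [inv2]
  | m+1 => by
    have hb := Fintype.sum_bijective (gperm (m := m)) gperm_bij
      (fun x => q ^ inv2 (gperm x)) (fun σ => q ^ inv2 σ) (fun x => rfl)
    rw [← hb, Fintype.sum_prod_type]
    have : ∀ t : Fin (m+1), ∑ τ : Equiv.Perm (Fin m), q ^ inv2 (gperm (t, τ))
        = q ^ (m - t.val) * ∑ τ : Equiv.Perm (Fin m), q ^ inv2 τ := by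
      intro t
      rw [Finset.mul_sum]
      apply Finset.sum_congr rfl
      intro τ _
      rw [inv2_gperm, pow_add]
    rw [Finset.sum_congr rfl (fun t _ => this t), ← Finset.sum_mul, sum_inv2 m,
      Finset.prod_Icc_succ_top (by omega : 1 ≤ m + 1)]
    rw [mul_comm]
    congr 1
    rw [Fin.sum_univ_eq_sum_range (fun i => q ^ (m - i)) (m+1)]
    have := Finset.sum_range_reflect (fun j => q ^ j) (m+1)
    simpa using this

def rowsOf {n : ℕ} (M : Fin n → Fin n → Bool) : Finset (Fin n) :=
  Finset.univ.filter (fun i => ∃ j, M i j = true)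

def colsOf {n : ℕ} (M : Fin n → Fin n → Bool) : Finset (Fin n) :=
  Finset.univ.filter (fun j => ∃ i, M i j = true)

theorem zeroRows_eq {n : ℕ} (M : Fin n → Fin n → Bool) :
    zeroRows M = n - (rowsOf M).card := by
  classical
  have h : Finset.univ.filter (fun i : Fin n => ∀ j, M i j = false) = (rowsOf M)ᶜ := by
    ext i
    simp [rowsOf, Finset.mem_compl]
  rw [zeroRows, h, Finset.card_compl, Fintype.card_fin]

section Fixed
variable {n m : ℕ} (A B : Finset (Fin n)) (hA : A.card = m) (hB : B.card = m)

def toM (σ : Equiv.Perm (Fin m)) : Fin n → Fin n → Bool := fun i j =>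
  decide (∃ s : Fin m, A.orderEmbOfFin hA s = i ∧ B.orderEmbOfFin hB (σ s) = j)

variable (σ : Equiv.Perm (Fin m))

theorem toM_true_iff (i j : Fin n) :
    toM A B hA hB σ i j = true ↔
      ∃ s : Fin m, A.orderEmbOfFin hA s = i ∧ B.orderEmbOfFin hB (σ s) = j := by
  simp [toM]

theorem mem_iff_orderEmb {C : Finset (Fin n)} (hC : C.card = m) (i : Fin n) :
    i ∈ C ↔ ∃ s : Fin m, C.orderEmbOfFin hC s = i := by
  constructor
  · intro h
    have : i ∈ Set.range (C.orderEmbOfFin hC) := by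
      rw [Finset.range_orderEmbOfFin]; exact h
    obtain ⟨s, hs⟩ := this
    exact ⟨s, hs⟩
  · rintro ⟨s, rfl⟩
    exact Finset.orderEmbOfFin_mem C hC s

theorem toM_row (s : Fin m) (j : Fin n) :
    toM A B hA hB σ (A.orderEmbOfFin hA s) j = true ↔ j = B.orderEmbOfFin hB (σ s) := by
  rw [toM_true_iff]
  constructor
  · rintro ⟨s', hs', rfl⟩
    rw [(A.orderEmbOfFin hA).injective hs']
  · rintro rfl
    exact ⟨s, rfl, rfl⟩

theorem toM_col (t : Fin m) (i : Fin n) :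
    toM A B hA hB σ i (B.orderEmbOfFin hB t) = true ↔ i = A.orderEmbOfFin hA (σ.symm t) := by
  rw [toM_true_iff]
  constructor
  · rintro ⟨s', rfl, hs'⟩
    have : σ s' = t := (B.orderEmbOfFin hB).injective hs'
    rw [← this, Equiv.symm_apply_apply]
  · rintro rfl
    exact ⟨σ.symm t, rfl, by rw [Equiv.apply_symm_apply]⟩

theorem toM_row0 {i : Fin n} (hi : i ∉ A) (j : Fin n) : toM A B hA hB σ i j = false := by
  rw [← Bool.not_eq_true, toM_true_iff]
  rintro ⟨s, rfl, -⟩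
  exact hi (Finset.orderEmbOfFin_mem A hA s)

theorem toM_col0 {j : Fin n} (hj : j ∉ B) (i : Fin n) : toM A B hA hB σ i j = false := by
  rw [← Bool.not_eq_true, toM_true_iff]
  rintro ⟨s, -, rfl⟩
  exact hj (Finset.orderEmbOfFin_mem B hB (σ s))

theorem isPP_toM : isPP (toM A B hA hB σ) := by
  constructor
  · intro i j j' hj hj'
    obtain ⟨s, rfl, rfl⟩ := (toM_true_iff A B hA hB σ _ _).mp hj
    obtain ⟨s', hs', rfl⟩ := (toM_true_iff A B hA hB σ _ _).mp hj'
    rw [(A.orderEmbOfFin hA).injective hs']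
  · intro i i' j hi hi'
    obtain ⟨s, rfl, rfl⟩ := (toM_true_iff A B hA hB σ _ _).mp hi
    obtain ⟨s', rfl, hs'⟩ := (toM_true_iff A B hA hB σ _ _).mp hi'
    rw [σ.injective ((B.orderEmbOfFin hB).injective hs')]

theorem rowsOf_toM : rowsOf (toM A B hA hB σ) = A := by
  ext i
  simp only [rowsOf, Finset.mem_filter, Finset.mem_univ, true_and]
  constructor
  · rintro ⟨j, hj⟩
    obtain ⟨s, rfl, -⟩ := (toM_true_iff A B hA hB σ _ _).mp hj
    exact Finset.orderEmbOfFin_mem A hA s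
  · intro hi
    obtain ⟨s, rfl⟩ := (mem_iff_orderEmb hA i).mp hi
    exact ⟨B.orderEmbOfFin hB (σ s), (toM_row A B hA hB σ s _).mpr rfl⟩

theorem colsOf_toM : colsOf (toM A B hA hB σ) = B := by
  ext j
  simp only [colsOf, Finset.mem_filter, Finset.mem_univ, true_and]
  constructor
  · rintro ⟨i, hi⟩
    obtain ⟨s, -, rfl⟩ := (toM_true_iff A B hA hB σ _ _).mp hi
    exact Finset.orderEmbOfFin_mem B hB (σ s)
  · intro hj
    obtain ⟨t, rfl⟩ := (mem_iff_orderEmb hB j).mp hj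
    exact ⟨A.orderEmbOfFin hA (σ.symm t), (toM_col A B hA hB σ t _).mpr rfl⟩

theorem zeroRows_toM : zeroRows (toM A B hA hB σ) = n - m := by
  rw [zeroRows_eq, rowsOf_toM, hA]

end Fixed

section PermOf
variable {n m : ℕ}

theorem exu (A : Finset (Fin n)) (hA : A.card = m) (M : Fin n → Fin n → Bool)
    (hPP : isPP M) (hr : rowsOf M = A) (s : Fin m) :
    ∃! j, j ∈ Finset.univ ∧ M (A.orderEmbOfFin hA s) j = true := by
  have hmem : A.orderEmbOfFin hA s ∈ rowsOf M := by
    rw [hr]; exact Finset.orderEmbOfFin_mem A hA s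
  obtain ⟨j, hj⟩ := (Finset.mem_filter.mp hmem).2
  exact ⟨j, ⟨Finset.mem_univ j, hj⟩, fun j' hj' => hPP.1 _ j' j hj'.2 hj⟩

noncomputable def chooseCol (A : Finset (Fin n)) (hA : A.card = m) (M : Fin n → Fin n → Bool)
    (hPP : isPP M) (hr : rowsOf M = A) (s : Fin m) : Fin n :=
  Finset.choose _ _ (exu A hA M hPP hr s)

theorem chooseCol_spec (A : Finset (Fin n)) (hA : A.card = m) (M : Fin n → Fin n → Bool)
    (hPP : isPP M) (hr : rowsOf M = A) (s : Fin m) :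
    M (A.orderEmbOfFin hA s) (chooseCol A hA M hPP hr s) = true :=
  Finset.choose_property _ _ (exu A hA M hPP hr s)

theorem chooseCol_mem (A B : Finset (Fin n)) (hA : A.card = m) (M : Fin n → Fin n → Bool)
    (hPP : isPP M) (hr : rowsOf M = A) (hc : colsOf M = B) (s : Fin m) :
    chooseCol A hA M hPP hr s ∈ B := by
  rw [← hc]
  exact Finset.mem_filter.mpr ⟨Finset.mem_univ _, ⟨_, chooseCol_spec A hA M hPP hr s⟩⟩

noncomputable def permOf (A B : Finset (Fin n)) (hA : A.card = m) (hB : B.card = m)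
    (M : Fin n → Fin n → Bool) (hPP : isPP M) (hr : rowsOf M = A) (hc : colsOf M = B) :
    Equiv.Perm (Fin m) :=
  Equiv.ofBijective
    (fun s => (B.orderIsoOfFin hB).symm
      ⟨chooseCol A hA M hPP hr s, chooseCol_mem A B hA M hPP hr hc s⟩)
    (Finite.injective_iff_bijective.mp (by
      intro s s' hss
      have h1 : chooseCol A hA M hPP hr s = chooseCol A hA M hPP hr s' := by
        have := congrArg (fun x => ((B.orderIsoOfFin hB) x : Fin n)) hss
        simpa using this
      have h2 := hPP.2 (A.orderEmbOfFin hA s) (A.orderEmbOfFin hA s') _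
        (chooseCol_spec A hA M hPP hr s) (h1 ▸ chooseCol_spec A hA M hPP hr s')
      exact (A.orderEmbOfFin hA).injective h2))

theorem orderEmb_permOf (A B : Finset (Fin n)) (hA : A.card = m) (hB : B.card = m)
    (M : Fin n → Fin n → Bool) (hPP : isPP M) (hr : rowsOf M = A) (hc : colsOf M = B) (s : Fin m) :
    B.orderEmbOfFin hB (permOf A B hA hB M hPP hr hc s) = chooseCol A hA M hPP hr s := by
  rw [permOf, Equiv.ofBijective_apply, ← Finset.coe_orderIsoOfFin_apply]
  simp

theorem toM_permOf (A B : Finset (Fin n)) (hA : A.card = m) (hB : B.card = m)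
    (M : Fin n → Fin n → Bool) (hPP : isPP M) (hr : rowsOf M = A) (hc : colsOf M = B) :
    toM A B hA hB (permOf A B hA hB M hPP hr hc) = M := by
  funext i j
  rcases h : M i j with hf | ht
  · rw [← Bool.not_eq_true, toM_true_iff]
    rintro ⟨s, rfl, hs⟩
    rw [orderEmb_permOf] at hs
    have := chooseCol_spec A hA M hPP hr s
    rw [hs, h] at this
    exact Bool.false_ne_true this
  · rw [toM_true_iff]
    have hiA : i ∈ A := by
      rw [← hr]; exact Finset.mem_filter.mpr ⟨Finset.mem_univ _, ⟨j, h⟩⟩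
    obtain ⟨s, rfl⟩ := (mem_iff_orderEmb hA i).mp hiA
    refine ⟨s, rfl, ?_⟩
    rw [orderEmb_permOf]
    exact hPP.1 _ _ _ (chooseCol_spec A hA M hPP hr s) h

theorem permOf_toM (A B : Finset (Fin n)) (hA : A.card = m) (hB : B.card = m)
    (σ : Equiv.Perm (Fin m)) (h1) (h2) (h3) :
    permOf A B hA hB (toM A B hA hB σ) h1 h2 h3 = σ := by
  apply Equiv.ext
  intro s
  apply (B.orderEmbOfFin hB).injective
  rw [orderEmb_permOf]
  have := chooseCol_spec A hA (toM A B hA hB σ) h1 h2 s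
  exact (toM_row A B hA hB σ s _).mp this

end PermOf

section InvDecomp
variable {n m : ℕ} (A B : Finset (Fin n)) (hA : A.card = m) (hB : B.card = m)
  (σ : Equiv.Perm (Fin m))

noncomputable def estat (C : Finset (Fin n)) (hC : C.card = m) : ℕ :=
  ∑ s : Fin m, (Finset.univ.filter (fun x : Fin n => x ∉ C ∧ x < C.orderEmbOfFin hC s)).card

private theorem bf {b : Bool} (h1 : b = false) (h2 : b = true) : False := by
  rw [h1] at h2; exact Bool.false_ne_true h2

theorem invStat_toM :
    invStat (toM A B hA hB σ) = estat B hB + inv2 σ + estat A hA := by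
  classical
  have hrow := toM_row A B hA hB σ
  have hcol := toM_col A B hA hB σ
  have htrue := toM_true_iff A B hA hB σ
  let T1 : Finset (Fin n × Fin n) := Finset.univ.biUnion (fun s : Fin m =>
    ({A.orderEmbOfFin hA s} : Finset (Fin n)) ×ˢ
      (Finset.univ.filter (fun j => j ∉ B ∧ j < B.orderEmbOfFin hB (σ s))))
  let T2 : Finset (Fin n × Fin n) := (Finset.univ.filter
      (fun p : Fin m × Fin m => p.1 < p.2 ∧ σ p.2 < σ p.1)).image
      (fun p => (A.orderEmbOfFin hA p.1, B.orderEmbOfFin hB (σ p.2)))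
  let T3 : Finset (Fin n × Fin n) := Finset.univ.biUnion (fun t : Fin m =>
    (Finset.univ.filter (fun i => i ∉ A ∧ i < A.orderEmbOfFin hA (σ.symm t))) ×ˢ
      ({B.orderEmbOfFin hB t} : Finset (Fin n)))
  have memT1 : ∀ p : Fin n × Fin n, p ∈ T1 ↔
      ∃ s, p.1 = A.orderEmbOfFin hA s ∧ p.2 ∉ B ∧ p.2 < B.orderEmbOfFin hB (σ s) := by
    intro p
    simp only [T1, Finset.mem_biUnion, Finset.mem_univ, true_and, Finset.mem_product,
      Finset.mem_singleton, Finset.mem_filter]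
    all_goals tauto
  have memT3 : ∀ p : Fin n × Fin n, p ∈ T3 ↔
      ∃ t, p.2 = B.orderEmbOfFin hB t ∧ p.1 ∉ A ∧ p.1 < A.orderEmbOfFin hA (σ.symm t) := by
    intro p
    simp only [T3, Finset.mem_biUnion, Finset.mem_univ, true_and, Finset.mem_product,
      Finset.mem_singleton, Finset.mem_filter]
    all_goals tauto
  have memT2 : ∀ p : Fin n × Fin n, p ∈ T2 ↔
      ∃ su : Fin m × Fin m, su.1 < su.2 ∧ σ su.2 < σ su.1 ∧
        p = (A.orderEmbOfFin hA su.1, B.orderEmbOfFin hB (σ su.2)) := by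
    intro p
    simp only [T2, Finset.mem_image, Finset.mem_filter, Finset.mem_univ, true_and]
    constructor
    · rintro ⟨su, ⟨h1, h2⟩, rfl⟩; exact ⟨su, h1, h2, rfl⟩
    · rintro ⟨su, h1, h2, rfl⟩; exact ⟨su, ⟨h1, h2⟩, rfl⟩
  have hset : Finset.univ.filter (fun p : Fin n × Fin n =>
      toM A B hA hB σ p.1 p.2 = false ∧ (∀ j' < p.2, toM A B hA hB σ p.1 j' = false) ∧
      (∀ i' < p.1, toM A B hA hB σ i' p.2 = false) ∧
      ((∃ j', toM A B hA hB σ p.1 j' = true) ∨ (∃ i', toM A B hA hB σ i' p.2 = true)))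
      = T1 ∪ T2 ∪ T3 := by
    ext p
    simp only [Finset.mem_filter, Finset.mem_univ, true_and, Finset.mem_union]
    rw [memT1, memT2, memT3]
    constructor
    · rintro ⟨hMf, hleft, hup, hor⟩
      by_cases hpA : p.1 ∈ A
      · obtain ⟨s, hs⟩ := (mem_iff_orderEmb hA p.1).mp hpA
        have hne : p.2 ≠ B.orderEmbOfFin hB (σ s) := by
          rintro h2
          exact bf hMf (by rw [← hs, h2]; exact (hrow s _).mpr rfl)
        have hlt : p.2 < B.orderEmbOfFin hB (σ s) := by
          rcases lt_or_ge p.2 (B.orderEmbOfFin hB (σ s)) with h | h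
          · exact h
          · exfalso
            have hlt2 : B.orderEmbOfFin hB (σ s) < p.2 := lt_of_le_of_ne h (Ne.symm hne)
            have h4 := hleft _ hlt2
            rw [← hs] at h4
            exact bf h4 ((hrow s _).mpr rfl)
        by_cases hpB : p.2 ∈ B
        · obtain ⟨t, ht⟩ := (mem_iff_orderEmb hB p.2).mp hpB
          left; right
          refine ⟨(s, σ.symm t), ?_, ?_, ?_⟩
          · have htrue2 : toM A B hA hB σ (A.orderEmbOfFin hA (σ.symm t)) p.2 = true := by
              rw [← ht]; exact (hcol t _).mpr rfl
            have hne2 : A.orderEmbOfFin hA (σ.symm t) ≠ p.1 := by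
              rintro h2
              rw [h2] at htrue2
              exact bf hMf htrue2
            have hge : ¬ (A.orderEmbOfFin hA (σ.symm t) < p.1) := fun h2 =>
              bf (hup _ h2) htrue2
            have h5 : p.1 < A.orderEmbOfFin hA (σ.symm t) :=
              lt_of_le_of_ne (not_lt.mp hge) (Ne.symm hne2)
            rw [← hs] at h5
            exact (OrderEmbedding.lt_iff_lt _).mp h5
          · have h5 : B.orderEmbOfFin hB (σ (σ.symm t)) < B.orderEmbOfFin hB (σ s) := by
              rw [Equiv.apply_symm_apply, ht]; exact hlt
            exact (OrderEmbedding.lt_iff_lt _).mp h5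
          · simp only [Equiv.apply_symm_apply]
            exact Prod.ext hs.symm ht.symm
        · left; left
          exact ⟨s, hs.symm, hpB, hlt⟩
      · right
        have hrows : ∀ j, toM A B hA hB σ p.1 j = false := toM_row0 A B hA hB σ hpA
        have hcolex : ∃ i', toM A B hA hB σ i' p.2 = true := by
          rcases hor with h | h
          · obtain ⟨j, hj⟩ := h; exact absurd hj (by rw [hrows j]; exact Bool.false_ne_true)
          · exact h
        obtain ⟨i', hi'⟩ := hcolex
        obtain ⟨s0, hs0, hcol0'⟩ := (htrue _ _).mp hi'
        refine ⟨σ s0, hcol0'.symm, hpA, ?_⟩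
        rw [Equiv.symm_apply_apply]
        have hne2 : A.orderEmbOfFin hA s0 ≠ p.1 := by
          rintro h2
          rw [← h2] at hpA; exact hpA (Finset.orderEmbOfFin_mem A hA s0)
        have hge : ¬ (A.orderEmbOfFin hA s0 < p.1) := by
          intro h2
          have h6 := hup _ h2
          rw [hs0] at h6
          exact bf h6 hi'
        exact lt_of_le_of_ne (not_lt.mp hge) (Ne.symm hne2)
    · rintro ((⟨s, hp1, hpB, hlt⟩ | ⟨⟨s, u⟩, hsu, hinv, hp⟩) | ⟨t, hp2, hpA, hlt⟩)
      · refine ⟨?_, ?_, ?_, Or.inl ⟨B.orderEmbOfFin hB (σ s), by rw [hp1]; exact (hrow s _).mpr rfl⟩⟩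
        · rw [← Bool.not_eq_true, hp1, hrow s]
          intro h2
          exact hpB (by rw [h2]; exact Finset.orderEmbOfFin_mem B hB (σ s))
        · intro j' hj'
          rw [← Bool.not_eq_true, hp1, hrow s]
          rintro rfl
          exact absurd (hj'.trans hlt) (lt_irrefl _)
        · intro i' _
          exact toM_col0 A B hA hB σ hpB i'
      · obtain ⟨hpa, hpb⟩ : p.1 = A.orderEmbOfFin hA s ∧ p.2 = B.orderEmbOfFin hB (σ u) := by
          rw [hp]; exact ⟨rfl, rfl⟩
        have hltA : A.orderEmbOfFin hA s < A.orderEmbOfFin hA u :=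
          (OrderEmbedding.lt_iff_lt _).mpr hsu
        have hltB : B.orderEmbOfFin hB (σ u) < B.orderEmbOfFin hB (σ s) :=
          (OrderEmbedding.lt_iff_lt _).mpr hinv
        refine ⟨?_, ?_, ?_, Or.inl ⟨B.orderEmbOfFin hB (σ s), by
          rw [hpa]; exact (hrow s _).mpr rfl⟩⟩
        · rw [← Bool.not_eq_true, hpa, hpb, hrow s]
          intro h2
          have h3 : σ u = σ s := (B.orderEmbOfFin hB).injective h2
          rw [σ.injective h3] at hsu
          exact absurd hsu (lt_irrefl _)
        · intro j' hj'
          rw [← Bool.not_eq_true, hpa, hrow s]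
          rintro rfl
          rw [hpb] at hj'
          exact absurd (hj'.trans hltB) (lt_irrefl _)
        · intro i' hi'
          rw [← Bool.not_eq_true, hpb, hcol (σ u)]
          rintro rfl
          rw [Equiv.symm_apply_apply] at hi'
          rw [hpa] at hi'
          exact absurd (hltA.trans hi') (lt_irrefl _)
      · refine ⟨?_, ?_, ?_, Or.inr ⟨A.orderEmbOfFin hA (σ.symm t), by
          rw [hp2]; exact (hcol t _).mpr rfl⟩⟩
        · rw [← Bool.not_eq_true, hp2, hcol t]
          intro h2
          exact hpA (by rw [h2]; exact Finset.orderEmbOfFin_mem A hA (σ.symm t))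
        · intro j' _
          exact toM_row0 A B hA hB σ hpA j'
        · intro i' hi'
          rw [← Bool.not_eq_true, hp2, hcol t]
          rintro rfl
          exact absurd (hi'.trans hlt) (lt_irrefl _)
  have d12 : Disjoint T1 T2 := by
    rw [Finset.disjoint_left]
    intro p hp1 hp2
    obtain ⟨s, -, hpB, -⟩ := (memT1 p).mp hp1
    obtain ⟨su, -, -, hpeq⟩ := (memT2 p).mp hp2
    apply hpB
    rw [hpeq]
    exact Finset.orderEmbOfFin_mem B hB (σ su.2)
  have d123 : Disjoint (T1 ∪ T2) T3 := by
    rw [Finset.disjoint_left]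
    intro p hp12 hp3
    obtain ⟨t, -, hpA, -⟩ := (memT3 p).mp hp3
    rcases Finset.mem_union.mp hp12 with h | h
    · obtain ⟨s, hp1, -, -⟩ := (memT1 p).mp h
      apply hpA; rw [hp1]; exact Finset.orderEmbOfFin_mem A hA s
    · obtain ⟨su, -, -, hpeq⟩ := (memT2 p).mp h
      apply hpA; rw [hpeq]; exact Finset.orderEmbOfFin_mem A hA su.1
  rw [invStat, hset, Finset.card_union_of_disjoint d123, Finset.card_union_of_disjoint d12]
  have c1 : T1.card = estat B hB := by
    rw [Finset.card_biUnion]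
    · have : ∀ s : Fin m, (({A.orderEmbOfFin hA s} : Finset (Fin n)) ×ˢ
          (Finset.univ.filter (fun j => j ∉ B ∧ j < B.orderEmbOfFin hB (σ s)))).card
          = (Finset.univ.filter (fun j : Fin n => j ∉ B ∧ j < B.orderEmbOfFin hB (σ s))).card := by
        intro s
        rw [Finset.card_product, Finset.card_singleton, one_mul]
      rw [Finset.sum_congr rfl (fun s _ => this s)]
      exact Equiv.sum_comp σ (fun t => (Finset.univ.filter
        (fun x : Fin n => x ∉ B ∧ x < B.orderEmbOfFin hB t)).card)
    · intro x _ y _ hxy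
      rw [Function.onFun, Finset.disjoint_left]
      intro p hp hq
      obtain ⟨h1, -⟩ := Finset.mem_product.mp hp
      obtain ⟨h2, -⟩ := Finset.mem_product.mp hq
      rw [Finset.mem_singleton] at h1 h2
      exact hxy ((A.orderEmbOfFin hA).injective (h1 ▸ h2 ▸ rfl))
  have c3 : T3.card = estat A hA := by
    rw [Finset.card_biUnion]
    · have : ∀ t : Fin m, ((Finset.univ.filter
          (fun i : Fin n => i ∉ A ∧ i < A.orderEmbOfFin hA (σ.symm t))) ×ˢ
          ({B.orderEmbOfFin hB t} : Finset (Fin n))).card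
          = (Finset.univ.filter (fun i : Fin n => i ∉ A ∧ i < A.orderEmbOfFin hA (σ.symm t))).card := by
        intro t
        rw [Finset.card_product, Finset.card_singleton, mul_one]
      rw [Finset.sum_congr rfl (fun t _ => this t)]
      exact Equiv.sum_comp σ.symm (fun s => (Finset.univ.filter
        (fun x : Fin n => x ∉ A ∧ x < A.orderEmbOfFin hA s)).card)
    · intro x _ y _ hxy
      rw [Function.onFun, Finset.disjoint_left]
      intro p hp hq
      obtain ⟨-, h1⟩ := Finset.mem_product.mp hp
      obtain ⟨-, h2⟩ := Finset.mem_product.mp hq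
      rw [Finset.mem_singleton] at h1 h2
      exact hxy ((B.orderEmbOfFin hB).injective (h1 ▸ h2 ▸ rfl))
  have c2 : T2.card = inv2 σ := by
    rw [Finset.card_image_of_injective _ (fun a b hab => ?_)]
    · rfl
    · obtain ⟨h1, h2⟩ := Prod.mk.injEq _ _ _ _ ▸ hab
      exact Prod.ext ((A.orderEmbOfFin hA).injective h1)
        (σ.injective ((B.orderEmbOfFin hB).injective h2))
  rw [c1, c2, c3]

end InvDecomp


section Glue
open Finset
variable {R : Type*} [CommRing R]

noncomputable def statFin {n : ℕ} (C : Finset (Fin n)) : ℕ :=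
  ∑ a ∈ C, (Finset.univ.filter (fun x : Fin n => x ∉ C ∧ x < a)).card

theorem image_orderEmbOfFin {n m : ℕ} (C : Finset (Fin n)) (hC : C.card = m) :
    Finset.univ.image (C.orderEmbOfFin hC) = C := by
  ext x
  simp only [Finset.mem_image, Finset.mem_univ, true_and]
  constructor
  · rintro ⟨s, rfl⟩; exact Finset.orderEmbOfFin_mem C hC s
  · intro hx
    obtain ⟨s, hs⟩ := (mem_iff_orderEmb hC x).mp hx
    exact ⟨s, hs⟩

theorem estat_eq {n m : ℕ} (C : Finset (Fin n)) (hC : C.card = m) :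
    estat C hC = statFin C := by
  classical
  have h := Finset.sum_image
    (f := fun a : Fin n => (Finset.univ.filter (fun x : Fin n => x ∉ C ∧ x < a)).card)
    (g := C.orderEmbOfFin hC) (s := (Finset.univ : Finset (Fin m)))
    (fun a _ b _ hab => (C.orderEmbOfFin hC).injective hab)
  rw [image_orderEmbOfFin C hC] at h
  rw [statFin, h]
  rfl

theorem statN_map {n : ℕ} (C : Finset (Fin n)) :
    statN (C.map Fin.valEmbedding) = statFin C := by
  rw [statN, Finset.sum_map, statFin]
  apply Finset.sum_congr rfl
  intro a _
  have hmap : (Finset.univ.filter (fun x : Fin n => x ∉ C ∧ x < a)).map Fin.valEmbedding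
      = (Finset.range (Fin.valEmbedding a)).filter (· ∉ C.map Fin.valEmbedding) := by
    ext y
    simp only [Finset.mem_map, Finset.mem_filter, Finset.mem_univ, true_and,
      Finset.mem_range, Fin.valEmbedding_apply]
    constructor
    · rintro ⟨x, ⟨hxC, hxa⟩, rfl⟩
      refine ⟨hxa, ?_⟩
      rintro ⟨z, hz, hzx⟩
      exact hxC ((Fin.val_injective hzx) ▸ hz)
    · rintro ⟨hy, hnot⟩
      have hyn : y < n := lt_trans hy a.isLt
      refine ⟨⟨y, hyn⟩, ⟨?_, ?_⟩, rfl⟩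
      · intro hmem
        exact hnot ⟨⟨y, hyn⟩, hmem, rfl⟩
      · exact hy
  rw [← Finset.card_map Fin.valEmbedding, hmap]

theorem sum_statFin (q : R) {n m : ℕ} (hm : m ≤ n) :
    ∑ C ∈ (Finset.univ : Finset (Fin n)).powersetCard m, q ^ statFin C
      = gbinom q n (n - m) := by
  classical
  have h1 : Finset.range n = (Finset.univ : Finset (Fin n)).map Fin.valEmbedding := by
    rw [Fin.map_valEmbedding_univ, Nat.Iio_eq_range]
  have := sum_statN q n m hm
  rw [h1, Finset.powersetCard_map, Finset.sum_map] at this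
  rw [← this]
  apply Finset.sum_congr rfl
  intro C _
  have h2 : (Finset.mapEmbedding Fin.valEmbedding).toEmbedding C
      = C.map Fin.valEmbedding := rfl
  rw [h2, statN_map]

theorem card_colsOf {n : ℕ} (M : Fin n → Fin n → Bool) (hPP : isPP M) :
    (colsOf M).card = (rowsOf M).card := by
  classical
  have exr : ∀ j ∈ colsOf M, ∃! i, i ∈ Finset.univ ∧ M i j = true := by
    intro j hj
    obtain ⟨i, hi⟩ := (Finset.mem_filter.mp hj).2
    exact ⟨i, ⟨Finset.mem_univ i, hi⟩, fun i' hi' => hPP.2 i' i j hi'.2 hi⟩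
  have exc : ∀ i ∈ rowsOf M, ∃! j, j ∈ Finset.univ ∧ M i j = true := by
    intro i hi
    obtain ⟨j, hj⟩ := (Finset.mem_filter.mp hi).2
    exact ⟨j, ⟨Finset.mem_univ j, hj⟩, fun j' hj' => hPP.1 i j' j hj'.2 hj⟩
  refine Finset.card_bij' (fun j hj => Finset.choose _ _ (exr j hj))
    (fun i hi => Finset.choose _ _ (exc i hi)) ?_ ?_ ?_ ?_
  · intro j hj
    exact Finset.mem_filter.mpr ⟨Finset.mem_univ _, ⟨j, Finset.choose_property _ _ (exr j hj)⟩⟩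
  · intro i hi
    exact Finset.mem_filter.mpr ⟨Finset.mem_univ _, ⟨i, Finset.choose_property _ _ (exc i hi)⟩⟩
  · intro j hj
    have h1 := Finset.choose_property _ _ (exr j hj)
    have h2 := Finset.choose_property _ _ (exc (Finset.choose _ _ (exr j hj))
      (Finset.mem_filter.mpr ⟨Finset.mem_univ _, ⟨j, h1⟩⟩))
    exact hPP.1 _ _ _ h2 h1
  · intro i hi
    have h1 := Finset.choose_property _ _ (exc i hi)
    have h2 := Finset.choose_property _ _ (exr (Finset.choose _ _ (exc i hi))
      (Finset.mem_filter.mpr ⟨Finset.mem_univ _, ⟨i, h1⟩⟩))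
    exact hPP.2 _ _ _ h2 h1

open scoped Classical in
theorem fiber_sum (q : R) {n m k : ℕ} (hmk : n - m = k)
    (p : Finset (Fin n) × Finset (Fin n)) (hA : p.1.card = m) (hB : p.2.card = m) :
    ∑ M ∈ Finset.univ.filter (fun M : Fin n → Fin n → Bool =>
        (isPP M ∧ zeroRows M = k) ∧ (rowsOf M, colsOf M) = p), q ^ invStat M
      = q ^ statFin p.1 * q ^ statFin p.2 *
          ∑ σ : Equiv.Perm (Fin m), q ^ inv2 σ := by
  have key : ∑ σ : Equiv.Perm (Fin m), (q ^ statFin p.1 * q ^ statFin p.2 * q ^ inv2 σ)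
      = ∑ M ∈ Finset.univ.filter (fun M : Fin n → Fin n → Bool =>
        (isPP M ∧ zeroRows M = k) ∧ (rowsOf M, colsOf M) = p), q ^ invStat M := by
    refine Finset.sum_bij' (fun σ _ => toM p.1 p.2 hA hB σ)
      (fun M hM => permOf p.1 p.2 hA hB M (Finset.mem_filter.mp hM).2.1.1
        (congrArg Prod.fst (Finset.mem_filter.mp hM).2.2)
        (congrArg Prod.snd (Finset.mem_filter.mp hM).2.2)) ?_ ?_ ?_ ?_ ?_
    · intro σ _
      refine Finset.mem_filter.mpr ⟨Finset.mem_univ _, ⟨⟨isPP_toM p.1 p.2 hA hB σ, ?_⟩, ?_⟩⟩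
      · rw [zeroRows_toM, hmk]
      · rw [rowsOf_toM, colsOf_toM]
    · intro M hM
      exact Finset.mem_univ _
    · intro σ _
      exact permOf_toM p.1 p.2 hA hB σ _ _ _
    · intro M hM
      exact toM_permOf p.1 p.2 hA hB M _ _ _
    · intro σ _
      rw [invStat_toM, estat_eq, estat_eq, pow_add, pow_add]
      ring
  rw [← key, ← Finset.mul_sum]

end Glue
end PP

open scoped Classical in
theorem stmt2 (n k : ℕ) :
    (∑ M : Fin n → Fin n → Bool,
        if PP.isPP M ∧ PP.zeroRows M = k then (Polynomial.X : Polynomial ℤ) ^ PP.invStat M else 0)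
    = PP.gbinom (Polynomial.X : Polynomial ℤ) n k ^ 2 *
        ∏ i ∈ Finset.Icc 1 (n - k), (∑ j ∈ Finset.range i, (Polynomial.X : Polynomial ℤ) ^ j) := by
  classical
  by_cases hk : k ≤ n
  · have hmk : n - (n - k) = k := by omega
    rw [← Finset.sum_filter]
    have hmaps : ∀ M ∈ Finset.univ.filter
        (fun M : Fin n → Fin n → Bool => PP.isPP M ∧ PP.zeroRows M = k),
        (PP.rowsOf M, PP.colsOf M) ∈
          ((Finset.univ : Finset (Fin n)).powersetCard (n - k) ×ˢ
            (Finset.univ : Finset (Fin n)).powersetCard (n - k)) := by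
      intro M hM
      obtain ⟨hPP, hz⟩ := (Finset.mem_filter.mp hM).2
      have h1 : (PP.rowsOf M).card ≤ n := by
        have := Finset.card_le_univ (PP.rowsOf M)
        simpa using this
      have h2 : PP.zeroRows M = n - (PP.rowsOf M).card := PP.zeroRows_eq M
      have h3 : (PP.rowsOf M).card = n - k := by omega
      refine Finset.mem_product.mpr ⟨?_, ?_⟩
      · exact Finset.mem_powersetCard.mpr ⟨Finset.subset_univ _, h3⟩
      · exact Finset.mem_powersetCard.mpr ⟨Finset.subset_univ _,
          (PP.card_colsOf M hPP).trans h3⟩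
    rw [← Finset.sum_fiberwise_of_maps_to hmaps
      (fun M => (Polynomial.X : Polynomial ℤ) ^ PP.invStat M)]
    have step : ∀ p ∈ ((Finset.univ : Finset (Fin n)).powersetCard (n - k) ×ˢ
        (Finset.univ : Finset (Fin n)).powersetCard (n - k)),
        (∑ M ∈ (Finset.univ.filter
            (fun M : Fin n → Fin n → Bool => PP.isPP M ∧ PP.zeroRows M = k)).filter
            (fun M => (PP.rowsOf M, PP.colsOf M) = p),
          (Polynomial.X : Polynomial ℤ) ^ PP.invStat M)
        = (Polynomial.X : Polynomial ℤ) ^ PP.statFin p.1 *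
            (Polynomial.X : Polynomial ℤ) ^ PP.statFin p.2 *
            ∑ σ : Equiv.Perm (Fin (n - k)), (Polynomial.X : Polynomial ℤ) ^ PP.inv2 σ := by
      intro p hp
      obtain ⟨hp1, hp2⟩ := Finset.mem_product.mp hp
      have c1 : p.1.card = n - k := (Finset.mem_powersetCard.mp hp1).2
      have c2 : p.2.card = n - k := (Finset.mem_powersetCard.mp hp2).2
      rw [Finset.filter_filter]
      exact PP.fiber_sum (Polynomial.X : Polynomial ℤ) hmk p c1 c2
    rw [Finset.sum_congr rfl step]
    rw [Finset.sum_product]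
    have expand : ∀ A ∈ (Finset.univ : Finset (Fin n)).powersetCard (n - k),
        (∑ B ∈ (Finset.univ : Finset (Fin n)).powersetCard (n - k),
          (Polynomial.X : Polynomial ℤ) ^ PP.statFin A *
            (Polynomial.X : Polynomial ℤ) ^ PP.statFin B *
            ∑ σ : Equiv.Perm (Fin (n - k)), (Polynomial.X : Polynomial ℤ) ^ PP.inv2 σ)
        = (Polynomial.X : Polynomial ℤ) ^ PP.statFin A *
            ((∑ B ∈ (Finset.univ : Finset (Fin n)).powersetCard (n - k),
              (Polynomial.X : Polynomial ℤ) ^ PP.statFin B) *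
            ∑ σ : Equiv.Perm (Fin (n - k)), (Polynomial.X : Polynomial ℤ) ^ PP.inv2 σ) := by
      intro A _
      have e1 : ∀ B ∈ (Finset.univ : Finset (Fin n)).powersetCard (n - k),
          (Polynomial.X : Polynomial ℤ) ^ PP.statFin A *
            (Polynomial.X : Polynomial ℤ) ^ PP.statFin B *
            (∑ σ : Equiv.Perm (Fin (n - k)), (Polynomial.X : Polynomial ℤ) ^ PP.inv2 σ)
          = (Polynomial.X : Polynomial ℤ) ^ PP.statFin A *
            ((Polynomial.X : Polynomial ℤ) ^ PP.statFin B *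
            ∑ σ : Equiv.Perm (Fin (n - k)), (Polynomial.X : Polynomial ℤ) ^ PP.inv2 σ) :=
        fun B _ => by ring
      rw [Finset.sum_congr rfl e1, ← Finset.mul_sum, ← Finset.sum_mul]
    rw [Finset.sum_congr rfl expand, ← Finset.sum_mul]
    rw [PP.sum_statFin (Polynomial.X : Polynomial ℤ) (Nat.sub_le n k), hmk,
      PP.sum_inv2 (Polynomial.X : Polynomial ℤ) (n - k)]
    ring
  · have h0 : ∀ M : Fin n → Fin n → Bool, ¬ (PP.isPP M ∧ PP.zeroRows M = k) := by
      rintro M ⟨-, hz⟩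
      have h1 : PP.zeroRows M ≤ n := by
        have := Finset.card_le_univ (Finset.univ.filter (fun i : Fin n => ∀ j, M i j = false))
        simpa [PP.zeroRows] using this
      omega
    rw [Finset.sum_congr rfl (fun M _ => if_neg (h0 M))]
    rw [PP.gbinom_eq_zero (Polynomial.X : Polynomial ℤ) (by omega)]
    simp
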